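/- In the Drasin–Sastry parameter construction, n · log(r_{n+1}/r_n) → ∞ as n → ∞. -/

import Mathlib

open Filter MeasureTheory Set

/-- In the Drasin–Sastry parameter construction, `n · log (r (n+1) / r n) → ∞` as `n → ∞`. -/
theorem drasinSastry_log_ratio_tendsto (n₀ : ℕ) (hn₀ : 2 ≤ n₀) (R' : ℝ) (hR' : 4 < R')
    (ν : ℝ → ℝ) (r : ℕ → ℝ)
    (hν₀ : ∀ t : ℝ, 0 ≤ t → t ≤ R' → ν t = n₀)
    (hrn₀ : r n₀ = R')
    (hrec : ∀ n : ℕ, n₀ ≤ n → r (n + 1) = Real.exp (∫ t in (1 : ℝ)..(r n), ν t / t))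
    (hνlin : ∀ n : ℕ, n₀ ≤ n → ∀ t : ℝ, r n ≤ t → t ≤ r (n + 1) →
      ν t = (t - r n) / (r (n + 1) - r n) + n) :
    Tendsto (fun n : ℕ => (n : ℝ) * Real.log (r (n + 1) / r n)) atTop atTop := by
  have hR1 : (1:ℝ) < R' := by linarith
  have hR0 : (0:ℝ) < R' := by linarith
  have hlogR' : (0:ℝ) < Real.log R' := Real.log_pos hR1
  have hn₀2 : (2:ℝ) ≤ (n₀:ℝ) := by exact_mod_cast hn₀
  -- From the three structural facts at level n, get the key integral lower bound.
  have key : ∀ n, n₀ ≤ n → R' ≤ r n →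
      (∀ t ∈ Icc (1:ℝ) (r n), (n₀:ℝ) ≤ ν t) →
      IntervalIntegrable (fun t => ν t / t) volume 1 (r n) →
      (n₀:ℝ) * Real.log (r n) ≤ Real.log (r (n+1)) := by
    intro n hn h1 h2 h3
    have hrn1 : (1:ℝ) < r n := by linarith
    have hrn0 : (0:ℝ) < r n := by linarith
    have hint : IntervalIntegrable (fun t : ℝ => (n₀:ℝ)/t) volume 1 (r n) := by
      apply ContinuousOn.intervalIntegrable
      apply ContinuousOn.div continuousOn_const continuousOn_id
      intro t ht
      rw [uIcc_of_le hrn1.le] at ht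
      simp only [id_eq]
      exact ne_of_gt (by linarith [ht.1])
    have hmono := intervalIntegral.integral_mono_on hrn1.le hint h3
      (fun t ht => by
        have ht0 : (0:ℝ) < t := by linarith [ht.1]
        exact div_le_div_of_nonneg_right (h2 t ht) ht0.le)
    have hval : (∫ t in (1:ℝ)..(r n), (n₀:ℝ)/t) = (n₀:ℝ) * Real.log (r n) := by
      simp only [div_eq_mul_inv]
      rw [intervalIntegral.integral_const_mul, integral_inv_of_pos one_pos hrn0, div_one]
    rw [hrec n hn, Real.log_exp]
    rw [hval] at hmono
    exact hmono
  -- Main induction establishing the structural facts for all n ≥ n₀.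
  have main : ∀ n, n₀ ≤ n → R' ≤ r n ∧
      (∀ t ∈ Icc (1:ℝ) (r n), (n₀:ℝ) ≤ ν t) ∧
      IntervalIntegrable (fun t => ν t / t) volume 1 (r n) := by
    intro n hn
    induction n, hn using Nat.le_induction with
    | base =>
      refine ⟨hrn₀.ge, ?_, ?_⟩
      · intro t ht
        rw [hrn₀] at ht
        rw [hν₀ t (by linarith [ht.1]) ht.2]
      · rw [hrn₀]
        have hc : ContinuousOn (fun t : ℝ => (n₀:ℝ) / t) (uIcc 1 R') := by
          apply ContinuousOn.div continuousOn_const continuousOn_id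
          intro t ht
          rw [uIcc_of_le hR1.le] at ht
          simp only [id_eq]
          exact ne_of_gt (by linarith [ht.1])
        refine hc.intervalIntegrable.congr ?_
        intro t ht
        rw [uIoc_of_le hR1.le] at ht
        simp only
        rw [hν₀ t (by linarith [ht.1]) ht.2]
    | succ n hn ih =>
      obtain ⟨h1, h2, h3⟩ := ih
      have hrn1 : (1:ℝ) < r n := by linarith
      have hrn0 : (0:ℝ) < r n := by linarith
      have hlogrn : 0 < Real.log (r n) := Real.log_pos hrn1
      have hk := key n hn h1 h2 h3
      have h2le : 2 * Real.log (r n) ≤ (n₀:ℝ) * Real.log (r n) :=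
        mul_le_mul_of_nonneg_right hn₀2 hlogrn.le
      have hrpos' : 0 < r (n+1) := by rw [hrec n hn]; exact Real.exp_pos _
      have hlt : r n < r (n+1) := by
        have hlog : Real.log (r n) < Real.log (r (n+1)) := by linarith
        calc r n = Real.exp (Real.log (r n)) := (Real.exp_log hrn0).symm
          _ < Real.exp (Real.log (r (n+1))) := Real.exp_lt_exp.2 hlog
          _ = r (n+1) := Real.exp_log hrpos'
      refine ⟨h1.trans hlt.le, ?_, ?_⟩
      · intro t ht
        rcases le_or_gt t (r n) with h | h
        · exact h2 t ⟨ht.1, h⟩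
        · rw [hνlin n hn t h.le ht.2]
          have hdiv : 0 ≤ (t - r n) / (r (n+1) - r n) :=
            div_nonneg (by linarith) (by linarith)
          have hnn : (n₀:ℝ) ≤ (n:ℝ) := by exact_mod_cast hn
          linarith
      · refine h3.trans ?_
        have hc : ContinuousOn (fun t : ℝ => ((t - r n)/(r (n+1) - r n) + n)/t)
            (uIcc (r n) (r (n+1))) := by
          apply ContinuousOn.div (by fun_prop) continuousOn_id
          intro t ht
          rw [uIcc_of_le hlt.le] at ht
          simp only [id_eq]
          exact ne_of_gt (by linarith [ht.1])
        refine hc.intervalIntegrable.congr ?_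
        intro t ht
        rw [uIoc_of_le hlt.le] at ht
        simp only
        rw [hνlin n hn t ht.1.le ht.2]
  -- Growth: log (r (n₀ + k)) ≥ (k+1) * log R'.
  have growth : ∀ k : ℕ, ((k:ℝ)+1) * Real.log R' ≤ Real.log (r (n₀ + k)) := by
    intro k
    induction k with
    | zero => simp [hrn₀]
    | succ k ih =>
      have hn : n₀ ≤ n₀ + k := Nat.le_add_right _ _
      obtain ⟨h1, h2, h3⟩ := main (n₀+k) hn
      have hk := key (n₀+k) hn h1 h2 h3
      have hpos : 0 < Real.log (r (n₀+k)) := lt_of_lt_of_le (by positivity) ih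
      have h2le : 2 * Real.log (r (n₀+k)) ≤ (n₀:ℝ) * Real.log (r (n₀+k)) :=
        mul_le_mul_of_nonneg_right hn₀2 hpos.le
      have hknn : 0 ≤ (k:ℝ) * Real.log R' := mul_nonneg (Nat.cast_nonneg _) hlogR'.le
      have heq : n₀ + (k+1) = (n₀ + k) + 1 := rfl
      rw [heq]
      push_cast
      push_cast at ih
      nlinarith
  -- Eventual lower bound for the target sequence.
  have hb : ∀ n, n₀ ≤ n →
      ((n:ℝ) - (n₀:ℝ) + 1) * Real.log R' ≤ (n:ℝ) * Real.log (r (n+1) / r n) := by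
    intro n hn
    obtain ⟨h1, h2, h3⟩ := main n hn
    have hk := key n hn h1 h2 h3
    have hrn0 : (0:ℝ) < r n := by linarith
    have hlogrn : 0 < Real.log (r n) := Real.log_pos (by linarith)
    have h2le : 2 * Real.log (r n) ≤ (n₀:ℝ) * Real.log (r n) :=
      mul_le_mul_of_nonneg_right hn₀2 hlogrn.le
    have hrpos' : 0 < r (n+1) := by rw [hrec n hn]; exact Real.exp_pos _
    have hgrow : ((n:ℝ) - (n₀:ℝ) + 1) * Real.log R' ≤ Real.log (r n) := by
      have h := growth (n - n₀)
      rw [Nat.add_sub_cancel' hn] at h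
      rwa [Nat.cast_sub hn] at h
    rw [Real.log_div (ne_of_gt hrpos') (ne_of_gt hrn0)]
    have hdiff : Real.log (r n) ≤ Real.log (r (n+1)) - Real.log (r n) := by linarith
    have h1n : (1:ℝ) ≤ (n:ℝ) := by
      have : 1 ≤ n := le_trans (le_trans one_le_two hn₀) hn
      exact_mod_cast this
    have hdnn : 0 ≤ Real.log (r (n+1)) - Real.log (r n) := le_trans hlogrn.le hdiff
    calc ((n:ℝ) - (n₀:ℝ) + 1) * Real.log R' ≤ Real.log (r n) := hgrow
      _ ≤ Real.log (r (n+1)) - Real.log (r n) := hdiff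
      _ ≤ (n:ℝ) * (Real.log (r (n+1)) - Real.log (r n)) := le_mul_of_one_le_left hdnn h1n
  -- Conclude.
  have hg : Tendsto (fun n : ℕ => ((n:ℝ) - (n₀:ℝ) + 1) * Real.log R') atTop atTop := by
    apply Tendsto.atTop_mul_const hlogR'
    simp only [sub_eq_add_neg]
    exact tendsto_atTop_add_const_right _ _
      (tendsto_atTop_add_const_right _ _ tendsto_natCast_atTop_atTop)
  exact tendsto_atTop_mono' atTop (eventually_atTop.2 ⟨n₀, hb⟩) hg
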